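/- Let G be an r×n matrix over F₂ and K ≥ 0 a real number. Then for every error vector e ∈ F₂ⁿ one has Z_e(G;K) ≤ Z_0(G;K), where 0 denotes the zero vector. -/

import Mathlib

open Matrix Filter

/-- Partition function `Z_e(G;K)` of the random-bond Ising model in Wegner's form. -/
noncomputable def Zf {ρ : Type*} [Fintype ρ] [DecidableEq ρ] {n : ℕ}
    (G : Matrix ρ (Fin n) (ZMod 2)) (e : Fin n → ZMod 2) (K : ℝ) : ℝ :=
  ∑ α : ρ → ZMod 2,
    Real.exp (K * ∑ b : Fin n, (-1 : ℝ) ^ ((e b).val + ((Matrix.vecMul α G) b).val))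

/-- `Hs` is an adapted dual of `H`: it stacks `G` on top of `k` extra rows, and its
row space equals `C_H^⊥ = {c | H cᵀ = 0}`. -/
def IsAdaptedDual {rG rH k n : ℕ} (G : Matrix (Fin rG) (Fin n) (ZMod 2))
    (H : Matrix (Fin rH) (Fin n) (ZMod 2))
    (Hs : Matrix (Fin rG ⊕ Fin k) (Fin n) (ZMod 2)) : Prop :=
  (∀ i, Hs (Sum.inl i) = G i) ∧
  LinearMap.range Hs.vecMulLinear = LinearMap.ker H.mulVecLin

/-- Homological difference `ΔF_e(G,H;K) = ln Z_e(H*;K) − ln Z_e(G;K)`. -/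
noncomputable def deltaF {ρ ρ' : Type*} [Fintype ρ] [DecidableEq ρ] [Fintype ρ'] [DecidableEq ρ'] {n : ℕ}
    (G : Matrix ρ (Fin n) (ZMod 2)) (Hs : Matrix ρ' (Fin n) (ZMod 2))
    (e : Fin n → ZMod 2) (K : ℝ) : ℝ :=
  Real.log (Zf Hs e K) - Real.log (Zf G e K)

/-- Disorder average `[X_e]_p = Σ_e p^{|e|}(1−p)^{n−|e|} X_e`. -/
noncomputable def davg {n : ℕ} (p : ℝ) (X : (Fin n → ZMod 2) → ℝ) : ℝ :=
  ∑ e : Fin n → ZMod 2, p ^ hammingNorm e * (1 - p) ^ (n - hammingNorm e) * X e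

/-- Average success probability of maximum-likelihood decoding. -/
noncomputable def Psucc {ρ ρ' : Type*} [Fintype ρ] [DecidableEq ρ] [Fintype ρ'] [DecidableEq ρ'] {n : ℕ}
    (G : Matrix ρ (Fin n) (ZMod 2)) (Hs : Matrix ρ' (Fin n) (ZMod 2))
    (K p : ℝ) : ℝ :=
  davg p (fun e => Zf G e K / Zf Hs e K)

/-- CSS distance `d_G`: minimum Hamming weight of a vector `c` with `H cᵀ = 0`
that is not in the row space of `G`. -/
noncomputable def dCSS {rG rH n : ℕ} (G : Matrix (Fin rG) (Fin n) (ZMod 2))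
    (H : Matrix (Fin rH) (Fin n) (ZMod 2)) : ℕ :=
  sInf {w | ∃ c : Fin n → ZMod 2,
    H.mulVec c = 0 ∧ (¬ ∃ α, Matrix.vecMul α G = c) ∧ hammingNorm c = w}

section Aux
open Finset

noncomputable def chi (x : ZMod 2) : ℝ := (-1) ^ x.val

lemma val01 : (ZMod.val (0:ZMod 2)) = 0 ∧ (ZMod.val (1:ZMod 2)) = 1 ∧ (ZMod.val (2:ZMod 2)) = 0 :=
  ⟨rfl, rfl, rfl⟩

lemma chi_zero : chi 0 = 1 := rfl

lemma chi_add (x y : ZMod 2) : chi (x + y) = chi x * chi y := by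
  rcases (by revert x; decide : ∀ x : ZMod 2, x = 0 ∨ x = 1) x with h | h <;>
    rcases (by revert y; decide : ∀ y : ZMod 2, y = 0 ∨ y = 1) y with h' | h' <;> subst h h' <;>
    norm_num [chi, val01.1, val01.2.1, val01.2.2, show (1 + 1 : ZMod 2) = 0 from rfl]

lemma chi_le_one (x : ZMod 2) : chi x ≤ 1 := by
  rcases (by revert x; decide : ∀ x : ZMod 2, x = 0 ∨ x = 1) x with h | h <;> subst h <;>
    norm_num [chi, val01.1, val01.2.1]

lemma neg_one_le_chi (x : ZMod 2) : -1 ≤ chi x := by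
  rcases (by revert x; decide : ∀ x : ZMod 2, x = 0 ∨ x = 1) x with h | h <;> subst h <;>
    norm_num [chi, val01.1, val01.2.1]

lemma chi_one : chi 1 = -1 := by norm_num [chi, val01.2.1]

lemma chi_sum {ι : Type*} (s : Finset ι) (f : ι → ZMod 2) :
    chi (∑ b ∈ s, f b) = ∏ b ∈ s, chi (f b) := by
  induction s using Finset.cons_induction with
  | empty => simp [chi_zero]
  | cons a s ha ih => rw [Finset.sum_cons, Finset.prod_cons, chi_add, ih]

lemma exp_K_chi (K : ℝ) (x : ZMod 2) :
    Real.exp (K * chi x) = Real.cosh K + chi x * Real.sinh K := by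
  have h : x = 0 ∨ x = 1 := by revert x; decide
  rcases h with h | h <;> subst h
  · rw [chi_zero, mul_one, one_mul, ← Real.cosh_add_sinh K]
  · rw [chi_one, mul_neg_one, ← Real.cosh_sub_sinh K]; ring

lemma sum_chi_two (f : ZMod 2 → ℝ) : (∑ x : ZMod 2, f x) = f 0 + f 1 := by
  rw [show (Finset.univ : Finset (ZMod 2)) = {0, 1} from by decide]
  simp

lemma sum_chi_nonneg {r n : ℕ} (G : Matrix (Fin r) (Fin n) (ZMod 2)) (u : Finset (Fin n)) :
    0 ≤ ∑ α : Fin r → ZMod 2, ∏ b ∈ u, chi (Matrix.vecMul α G b) := by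
  have h1 : ∀ α : Fin r → ZMod 2, (∏ b ∈ u, chi (Matrix.vecMul α G b))
      = ∏ i : Fin r, chi (α i * ∑ b ∈ u, G i b) := by
    intro α
    rw [← chi_sum, ← chi_sum]
    congr 1
    have h : ∀ b, Matrix.vecMul α G b = ∑ i, α i * G i b := fun b => rfl
    simp_rw [h, Finset.mul_sum]
    exact Finset.sum_comm
  simp_rw [h1]
  rw [← Fintype.piFinset_univ,
    ← Finset.prod_univ_sum (fun _ => (Finset.univ : Finset (ZMod 2)))
      (fun i x => chi (x * ∑ b ∈ u, G i b))]
  apply Finset.prod_nonneg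
  intro i _
  rw [sum_chi_two (fun x => chi (x * ∑ b ∈ u, G i b)), zero_mul, one_mul, chi_zero]
  have := neg_one_le_chi (∑ b ∈ u, G i b)
  linarith

lemma Zf_expand {r n : ℕ} (G : Matrix (Fin r) (Fin n) (ZMod 2)) (K : ℝ)
    (e : Fin n → ZMod 2) :
    Zf G e K =
      ∑ t ∈ (Finset.univ : Finset (Fin n)).powerset,
        (Real.cosh K ^ t.card * Real.sinh K ^ ((Finset.univ : Finset (Fin n)) \ t).card) *
        ((∏ b ∈ (Finset.univ : Finset (Fin n)) \ t, chi (e b)) *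
          ∑ α : Fin r → ZMod 2, ∏ b ∈ (Finset.univ : Finset (Fin n)) \ t,
            chi (Matrix.vecMul α G b)) := by
  unfold Zf
  have h1 : ∀ α : Fin r → ZMod 2,
      Real.exp (K * ∑ b : Fin n, (-1 : ℝ) ^ ((e b).val + ((Matrix.vecMul α G) b).val)) =
      ∏ b : Fin n, (Real.cosh K + chi (e b) * chi (Matrix.vecMul α G b) * Real.sinh K) := by
    intro α
    have h2 : ∀ b : Fin n, ((-1 : ℝ)) ^ ((e b).val + ((Matrix.vecMul α G) b).val)
        = chi (e b + Matrix.vecMul α G b) := by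
      intro b; rw [chi_add]; unfold chi; rw [pow_add]
    simp_rw [h2]
    rw [Finset.mul_sum, Real.exp_sum]
    refine Finset.prod_congr rfl fun b _ => ?_
    rw [exp_K_chi K _, chi_add]
  simp_rw [h1]
  have h3 : ∀ α : Fin r → ZMod 2,
      (∏ b : Fin n, (Real.cosh K + chi (e b) * chi (Matrix.vecMul α G b) * Real.sinh K)) =
      ∑ t ∈ (Finset.univ : Finset (Fin n)).powerset,
        (∏ _b ∈ t, Real.cosh K) *
          ∏ b ∈ (Finset.univ : Finset (Fin n)) \ t,
            (chi (e b) * chi (Matrix.vecMul α G b) * Real.sinh K) :=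
    fun α => Finset.prod_add _ _ _
  simp_rw [h3]
  rw [Finset.sum_comm]
  refine Finset.sum_congr rfl fun t _ => ?_
  simp_rw [Finset.prod_mul_distrib, Finset.prod_const]
  rw [Finset.mul_sum, Finset.mul_sum]
  refine Finset.sum_congr rfl fun α _ => ?_
  ring


end Aux

/-- For `K ≥ 0`, the zero-error partition function dominates: `Z_e(G;K) ≤ Z_0(G;K)`. -/
theorem stmt1 {r n : ℕ} (G : Matrix (Fin r) (Fin n) (ZMod 2))
    (K : ℝ) (hK : 0 ≤ K) (e : Fin n → ZMod 2) :
    Zf G e K ≤ Zf G 0 K := by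
  rw [Zf_expand G K e, Zf_expand G K 0]
  refine Finset.sum_le_sum fun t _ => ?_
  have hA : 0 ≤ Real.cosh K ^ t.card *
      Real.sinh K ^ ((Finset.univ : Finset (Fin n)) \ t).card :=
    mul_nonneg (pow_nonneg (Real.cosh_pos K).le _)
      (pow_nonneg (Real.sinh_nonneg_iff.mpr hK) _)
  have hS := sum_chi_nonneg G ((Finset.univ : Finset (Fin n)) \ t)
  have hPe : (∏ b ∈ (Finset.univ : Finset (Fin n)) \ t, chi (e b)) ≤ 1 := by
    rw [← chi_sum]; exact chi_le_one _
  have hP0 : (∏ b ∈ (Finset.univ : Finset (Fin n)) \ t, chi ((0 : Fin n → ZMod 2) b)) = 1 := by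
    simp [chi_zero]
  rw [hP0, one_mul]
  refine mul_le_mul_of_nonneg_left ?_ hA
  calc (∏ b ∈ (Finset.univ : Finset (Fin n)) \ t, chi (e b)) *
        ∑ α : Fin r → ZMod 2, ∏ b ∈ (Finset.univ : Finset (Fin n)) \ t, chi (Matrix.vecMul α G b)
      ≤ 1 * ∑ α : Fin r → ZMod 2, ∏ b ∈ (Finset.univ : Finset (Fin n)) \ t, chi (Matrix.vecMul α G b) :=
        mul_le_mul_of_nonneg_right hPe hS
    _ = _ := one_mul _
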